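/- Let p, q be distinct primes with r = ord_p(q), let P̄ be an irreducible factor of Φ_p over 𝔽_q, and ω = X in 𝔽_q[X]/P̄. For A, B ⊆ {0,...,p−1} of equal size k and s_A = Σ_μ c_μ x^μ, one has in 𝔽_q[X]/P̄: Σ_{l=0}^{r−1} α_{q^l·B}(s_A) = r·m^{(0)}_{A,B} − Σ_{i=1}^{(p−1)/r} m^{(n_i)}_{A,B}·L_{X^{n_i}}, where L_{X^i} denotes the trace coefficient (second-highest coefficient of the minimal polynomial of X^i over 𝔽_q), n_1,...,n_{(p−1)/r} are coset representatives of (𝔽_p)^×/⟨q⟩, and m^{(i)}_{A,B} counts exponents μ with ⟨μ,B⟩ in the coset of i. -/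

import Mathlib

open MvPolynomial Polynomial Classical

section AuxFrob

variable {q : ℕ} [Fact q.Prime] {K : Type*} [Field K] [Algebra (ZMod q) K]

private lemma frob_aeval (x : K) (f : Polynomial (ZMod q)) :
    (Polynomial.aeval x f) ^ q = Polynomial.aeval (x ^ q) f := by
  haveI : CharP K q := charP_of_injective_algebraMap (algebraMap (ZMod q) K).injective q
  induction f using Polynomial.induction_on' with
  | add f g hf hg => rw [map_add, map_add, add_pow_char, hf, hg]
  | monomial n c =>
      rw [Polynomial.aeval_monomial, Polynomial.aeval_monomial, mul_pow, ← map_pow,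
        ZMod.pow_card, ← pow_mul, mul_comm n q, pow_mul]

private lemma frob_aeval_pow (x : K) (t : ℕ) (f : Polynomial (ZMod q)) :
    (Polynomial.aeval x f) ^ q ^ t = Polynomial.aeval (x ^ q ^ t) f := by
  induction t with
  | zero => simp
  | succ t ih => rw [pow_succ, pow_mul, ih, frob_aeval, ← pow_mul, ← pow_succ]

end AuxFrob

/-- Nonprimitive case: in `𝔽_q[X]/P̄`, with `P̄` an irreducible factor of `Φ_p`
and `ω = X`, one has
`Σ_{l=0}^{r−1} α_{q^l·B}(s_A) = r·m⁰_{A,B} − Σ_i m^{(nᵢ)}_{A,B} · L_{X^{nᵢ}}`. -/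
theorem sum_conjugated_schur_substitutions_nonprimitive
    (p q r : ℕ) (hp : p.Prime) (hq : q.Prime) (hpq : p ≠ q)
    [Fact q.Prime] [Fact p.Prime]
    (hr : orderOf (q : ZMod p) = r)
    (Pbar : Polynomial (ZMod q)) (hPirr : Irreducible Pbar)
    (hPdvd : Pbar ∣ ∑ i ∈ Finset.range p, (Polynomial.X : Polynomial (ZMod q)) ^ i)
    -- coset representatives `n 1, ..., n ((p-1)/r)` of `(𝔽_p)^× / ⟨q⟩`
    (n : Fin ((p - 1) / r) → ℕ)
    (hn0 : ∀ i, ¬ (p : ℤ) ∣ (n i : ℤ))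
    (hn : ∀ x : (ZMod p)ˣ, ∃! i : Fin ((p - 1) / r),
        ∃ l : ℕ, (x : ZMod p) = (n i : ZMod p) * (q : ZMod p) ^ l)
    -- the Schur polynomial data
    (k : ℕ) (a b : Fin k → ℕ)
    (ha : StrictMono a) (hb : StrictMono b)
    (hap : ∀ i, a i < p) (hbp : ∀ i, b i < p)
    (s : MvPolynomial (Fin k) ℤ)
    (hs : Matrix.det (fun i j : Fin k => (MvPolynomial.X j : MvPolynomial (Fin k) ℤ) ^ a i)
        = (∏ w ∈ Finset.univ.filter (fun w : Fin k × Fin k => w.1 < w.2),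
            (MvPolynomial.X w.2 - MvPolynomial.X w.1)) * s)
    -- the counts m⁰ and m^{(n i)}
    (m0 : ℤ)
    (hm0 : m0 = ∑ μ ∈ s.support,
        s.coeff μ * (if (p : ℤ) ∣ (∑ j : Fin k, (μ j : ℤ) * (b j : ℤ)) then 1 else 0))
    (m : Fin ((p - 1) / r) → ℤ)
    (hm : ∀ i, m i = ∑ μ ∈ s.support,
        s.coeff μ * (if ∃ l : ℕ,
            ((∑ j : Fin k, (μ j : ℤ) * (b j : ℤ) : ℤ) : ZMod p)
              = (n i : ZMod p) * (q : ZMod p) ^ l then 1 else 0))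
    -- the traces L_{X^{n i}}
    (L : Fin ((p - 1) / r) → ZMod q)
    (hL : ∀ i, L i = (minpoly (ZMod q) ((AdjoinRoot.root Pbar) ^ (n i))).coeff
        ((minpoly (ZMod q) ((AdjoinRoot.root Pbar) ^ (n i))).natDegree - 1)) :
    (∑ l ∈ Finset.range r,
        MvPolynomial.aeval
          (fun j : Fin k => (AdjoinRoot.root Pbar) ^ ((q ^ l * b j) % p)) s)
      = ((r * m0 : ℤ) : AdjoinRoot Pbar)
        - ∑ i : Fin ((p - 1) / r),
            ((m i : ℤ) : AdjoinRoot Pbar) * algebraMap (ZMod q) (AdjoinRoot Pbar) (L i) := by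
  haveI : Fact (Irreducible Pbar) := ⟨hPirr⟩
  set K := AdjoinRoot Pbar with hKdef
  set ω : K := AdjoinRoot.root Pbar with hωdef
  -- basic numerics
  have hqp0 : (q : ZMod p) ≠ 0 := by
    rw [Ne, ZMod.natCast_eq_zero_iff]
    exact fun h => hpq ((Nat.prime_dvd_prime_iff_eq hp hq).mp h)
  have hpq0 : (p : ZMod q) ≠ 0 := by
    rw [Ne, ZMod.natCast_eq_zero_iff]
    exact fun h => hpq ((Nat.prime_dvd_prime_iff_eq hq hp).mp h).symm
  have hr0 : 0 < r := by
    rw [← hr]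
    refine (isOfFinOrder_iff_pow_eq_one.mpr ⟨p - 1, ?_, ZMod.pow_card_sub_one_eq_one hqp0⟩).orderOf_pos
    have := hp.two_le; omega
  have hqr1 : (q : ZMod p) ^ r = 1 := by rw [← hr]; exact pow_orderOf_eq_one _
  -- ω has order p
  have hωp : ω ^ p = 1 := by
    have hdvd : Pbar ∣ Polynomial.X ^ p - 1 :=
      hPdvd.trans ⟨Polynomial.X - 1, (geom_sum_mul _ _).symm⟩
    have h2 := AdjoinRoot.mk_eq_zero.mpr hdvd
    rw [map_sub, map_pow, AdjoinRoot.mk_X, map_one, sub_eq_zero] at h2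
    exact h2
  have hΦω : ∑ i ∈ Finset.range p, ω ^ i = 0 := by
    have h2 := AdjoinRoot.mk_eq_zero.mpr hPdvd
    simpa only [map_sum, map_pow, AdjoinRoot.mk_X] using h2
  have hω1 : ω ≠ 1 := by
    intro h
    rw [h] at hΦω
    simp only [one_pow, Finset.sum_const, Finset.card_range, nsmul_eq_mul, mul_one] at hΦω
    have h0 : algebraMap (ZMod q) K (p : ZMod q) = algebraMap (ZMod q) K 0 := by
      rw [map_natCast, map_zero]; exact_mod_cast hΦω
    exact hpq0 ((algebraMap (ZMod q) K).injective h0)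
  have hωord : orderOf ω = p := orderOf_eq_prime hωp hω1
  obtain ⟨u, hu⟩ : IsUnit ω := IsUnit.of_pow_eq_one hωp hp.ne_zero
  have huord : orderOf u = p := by rw [← hωord, ← hu, orderOf_units]
  have hωpow : ∀ m m' : ℕ, ω ^ m = ω ^ m' ↔ (m : ZMod p) = (m' : ZMod p) := by
    intro m m'
    rw [ZMod.natCast_eq_natCast_iff, ← huord, ← pow_eq_pow_iff_modEq, ← Units.val_inj,
      Units.val_pow_eq_pow_val, Units.val_pow_eq_pow_val, hu]
  have hωcast : ∀ m m' : ℕ, (m : ZMod p) = (m' : ZMod p) → ω ^ m = ω ^ m' :=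
    fun m m' h => (hωpow m m').mpr h
  -- the conjugate-sum function
  set T : ℕ → K := fun x => ∑ l ∈ Finset.range r, ω ^ (q ^ l * x) with hT
  have hTshift : ∀ x : ℕ, T (q * x) = T x := by
    intro x
    have hstep : ∀ l : ℕ, ω ^ (q ^ l * (q * x)) = ω ^ (q ^ (l + 1) * x) := by
      intro l; congr 1; ring
    have hfr : ω ^ (q ^ r * x) = ω ^ (q ^ 0 * x) := by
      apply hωcast; push_cast [hqr1]; ring
    have h1 : (∑ l ∈ Finset.range r, ω ^ (q ^ (l + 1) * x)) + ω ^ (q ^ 0 * x)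
        = (∑ l ∈ Finset.range r, ω ^ (q ^ l * x)) + ω ^ (q ^ r * x) := by
      rw [← Finset.sum_range_succ' (fun l => ω ^ (q ^ l * x)) r,
        Finset.sum_range_succ (fun l => ω ^ (q ^ l * x)) r]
    rw [hT]
    simp only [hstep]
    have := h1.trans (by rw [hfr])
    exact add_right_cancel this
  have hTB : ∀ (l0 x x' : ℕ), (x : ZMod p) = (x' : ZMod p) * (q : ZMod p) ^ l0 → T x = T x' := by
    intro l0
    induction l0 with
    | zero =>
        intro x x' h
        rw [pow_zero, mul_one] at h
        refine Finset.sum_congr rfl fun l _ => hωcast _ _ ?_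
        push_cast [h]; ring
    | succ t ih =>
        intro x x' h
        have h2 : (x : ZMod p) = ((q * x' : ℕ) : ZMod p) * (q : ZMod p) ^ t := by
          push_cast [h]; ring
        rw [ih x (q * x') h2, hTshift]
  -- finite dimensionality and counting
  haveI : FiniteDimensional (ZMod q) K := PowerBasis.finite (AdjoinRoot.powerBasis hPirr.ne_zero)
  haveI : Finite K := Module.finite_of_finite (ZMod q)
  haveI : Fintype K := Fintype.ofFinite K
  have hxfix : ∀ x : K, x ^ q ^ r = x := by
    intro x
    obtain ⟨g, rfl⟩ := AdjoinRoot.mk_surjective (g := Pbar) x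
    have hωr : ω ^ q ^ r = ω := by
      have := hωcast (q ^ r) 1 (by push_cast [hqr1]; ring)
      simpa using this
    rw [← AdjoinRoot.aeval_eq, frob_aeval_pow, hωr, AdjoinRoot.aeval_eq]
  have hcardK : Fintype.card K = q ^ Module.finrank (ZMod q) K := by
    have := Module.card_eq_pow_finrank (K := ZMod q) (V := K)
    rwa [ZMod.card] at this
  have hfinrank_le : Module.finrank (ZMod q) K ≤ r := by
    have hne : (Polynomial.X ^ q ^ r - Polynomial.X : K[X]) ≠ 0 :=
      FiniteField.X_pow_card_pow_sub_X_ne_zero _ hr0.ne' hq.one_lt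
    have hsub : Finset.univ ⊆ (Polynomial.X ^ q ^ r - Polynomial.X : K[X]).roots.toFinset := by
      intro x _
      rw [Multiset.mem_toFinset, Polynomial.mem_roots hne]
      simp [Polynomial.IsRoot, hxfix x]
    have hcard : Fintype.card K ≤ q ^ r := by
      calc Fintype.card K = Finset.univ.card := (Finset.card_univ (α := K)).symm
        _ ≤ (Polynomial.X ^ q ^ r - Polynomial.X : K[X]).roots.toFinset.card :=
            Finset.card_le_card hsub
        _ ≤ Multiset.card (Polynomial.X ^ q ^ r - Polynomial.X : K[X]).roots :=
            Multiset.toFinset_card_le _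
        _ ≤ (Polynomial.X ^ q ^ r - Polynomial.X : K[X]).natDegree := Polynomial.card_roots' _
        _ = q ^ r := FiniteField.X_pow_card_pow_sub_X_natDegree_eq _ hr0.ne' hq.one_lt
    rw [hcardK] at hcard
    exact (Nat.pow_le_pow_iff_right hq.one_lt).mp hcard
  -- key lemma: the trace sum
  have hkey : ∀ nn : ℕ, ¬ p ∣ nn →
      T nn = - algebraMap (ZMod q) K ((minpoly (ZMod q) (ω ^ nn)).coeff
        ((minpoly (ZMod q) (ω ^ nn)).natDegree - 1)) := by
    intro nn hnn
    set β : K := ω ^ nn with hβ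
    have hnnz : (nn : ZMod p) ≠ 0 := by
      rw [Ne, ZMod.natCast_eq_zero_iff]; exact hnn
    have hβint : IsIntegral (ZMod q) β := IsIntegral.of_finite _ _
    set P : Polynomial (ZMod q) := minpoly (ZMod q) β with hPdef
    have hPmonic : P.Monic := minpoly.monic hβint
    have hd_le : P.natDegree ≤ r := (minpoly.natDegree_le β).trans hfinrank_le
    have hβroot : ∀ l : ℕ, Polynomial.aeval (β ^ q ^ l) P = 0 := by
      intro l
      rw [← frob_aeval_pow, minpoly.aeval, zero_pow (pow_ne_zero l hq.ne_zero)]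
    obtain ⟨v, hv⟩ : IsUnit (q : ZMod p) := isUnit_iff_ne_zero.mpr hqp0
    have hvord : orderOf v = r := by rw [← hr, ← hv, orderOf_units]
    have hinj : ∀ l ∈ Finset.range r, ∀ l' ∈ Finset.range r, β ^ q ^ l = β ^ q ^ l' → l = l' := by
      intro l hl l' hl' h
      rw [hβ, ← pow_mul, ← pow_mul, hωpow] at h
      push_cast at h
      have h2 : (v : ZMod p) ^ l = (v : ZMod p) ^ l' := by
        rw [hv]; exact mul_left_cancel₀ hnnz h
      have h3 : v ^ l = v ^ l' := by
        rw [← Units.val_inj, Units.val_pow_eq_pow_val, Units.val_pow_eq_pow_val]; exact h2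
      rw [pow_eq_pow_iff_modEq, hvord, Nat.ModEq,
        Nat.mod_eq_of_lt (Finset.mem_range.mp hl), Nat.mod_eq_of_lt (Finset.mem_range.mp hl')] at h3
      exact h3
    set S : Finset K := (Finset.range r).image (fun l => β ^ q ^ l) with hS
    have hScard : S.card = r := by
      rw [hS, Finset.card_image_of_injOn (fun a ha b hb h =>
        hinj a (by exact_mod_cast ha) b (by exact_mod_cast hb) h), Finset.card_range]
    set Pm : K[X] := P.map (algebraMap (ZMod q) K) with hPm
    have hPmne : Pm ≠ 0 := Polynomial.map_ne_zero (minpoly.ne_zero hβint)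
    have hPmdeg : Pm.natDegree = P.natDegree := Polynomial.natDegree_map (algebraMap (ZMod q) K)
    have hSsub : S ⊆ Pm.roots.toFinset := by
      intro x hx
      rw [hS, Finset.mem_image] at hx
      obtain ⟨l, hl, rfl⟩ := hx
      rw [Multiset.mem_toFinset, Polynomial.mem_roots hPmne]
      show Polynomial.eval _ Pm = 0
      rw [hPm, Polynomial.eval_map, ← Polynomial.aeval_def]
      exact hβroot l
    have hge : r ≤ P.natDegree := by
      calc r = S.card := hScard.symm
        _ ≤ Pm.roots.toFinset.card := Finset.card_le_card hSsub
        _ ≤ Multiset.card Pm.roots := Multiset.toFinset_card_le _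
        _ ≤ Pm.natDegree := Polynomial.card_roots' _
        _ = P.natDegree := hPmdeg
    have hdeq : P.natDegree = r := le_antisymm hd_le hge
    have hroots_card : Multiset.card Pm.roots = r :=
      le_antisymm (by rw [← hdeq, ← hPmdeg]; exact Polynomial.card_roots' _)
        (by calc r = S.card := hScard.symm
              _ ≤ Pm.roots.toFinset.card := Finset.card_le_card hSsub
              _ ≤ Multiset.card Pm.roots := Multiset.toFinset_card_le _)
    have hle : S.val ≤ Pm.roots := by
      rw [Multiset.le_iff_subset S.nodup]
      intro x hx
      have := hSsub (by exact hx : x ∈ S)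
      rwa [Multiset.mem_toFinset] at this
    have hroots_eq : Pm.roots = S.val :=
      (Multiset.eq_of_le_of_card_le hle (by rw [hroots_card]; exact le_of_eq hScard.symm)).symm
    have hprod := Polynomial.prod_multiset_X_sub_C_of_monic_of_roots_card_eq
      (hPmonic.map (algebraMap (ZMod q) K)) (by rw [hroots_card, hPmdeg, hdeq])
    have hnext : Pm.nextCoeff = - S.val.sum := by
      calc Pm.nextCoeff = ((Pm.roots.map fun a => Polynomial.X - Polynomial.C a).prod).nextCoeff := by
            rw [hprod]
        _ = - Pm.roots.sum := Polynomial.multiset_prod_X_sub_C_nextCoeff _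
        _ = - S.val.sum := by rw [hroots_eq]
    have hsum : S.val.sum = ∑ l ∈ Finset.range r, β ^ q ^ l := by
      have h4 := Finset.sum_image (s := Finset.range r) (f := fun x : K => x)
        (g := fun l : ℕ => β ^ q ^ l) (fun a ha b hb h => hinj a ha b hb h)
      rw [← h4]
      simp only [hS, Finset.sum, Multiset.map_id']
    have hnext2 : Pm.nextCoeff = algebraMap (ZMod q) K P.nextCoeff :=
      Polynomial.nextCoeff_map (algebraMap (ZMod q) K).injective P
    have hdpos : 0 < P.natDegree := by rw [hdeq]; exact hr0
    have hcoeff : P.nextCoeff = P.coeff (P.natDegree - 1) :=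
      Polynomial.nextCoeff_of_natDegree_pos hdpos
    have hTnn : T nn = ∑ l ∈ Finset.range r, β ^ q ^ l := by
      refine Finset.sum_congr rfl fun l _ => ?_
      rw [hβ, ← pow_mul, mul_comm]
    have halg : algebraMap (ZMod q) K (P.coeff (P.natDegree - 1)) = - S.val.sum := by
      rw [← hcoeff, ← hnext2, hnext]
    rw [hTnn, ← hsum, halg, neg_neg]
  -- cast conversions
  have hMcast : ∀ μ : Fin k →₀ ℕ,
      ((∑ j : Fin k, (μ j : ℤ) * (b j : ℤ) : ℤ) : ZMod p)
        = ((∑ j : Fin k, μ j * b j : ℕ) : ZMod p) := by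
    intro μ; push_cast; ring
  have hMdvd : ∀ μ : Fin k →₀ ℕ,
      ((p : ℤ) ∣ (∑ j : Fin k, (μ j : ℤ) * (b j : ℤ))) ↔ p ∣ (∑ j : Fin k, μ j * b j) := by
    intro μ
    have h5 : (∑ j : Fin k, (μ j : ℤ) * (b j : ℤ)) = ((∑ j : Fin k, μ j * b j : ℕ) : ℤ) := by
      push_cast; ring
    rw [h5, Int.natCast_dvd_natCast]
  -- rewrite the left-hand side
  have hLHS : (∑ l ∈ Finset.range r,
        MvPolynomial.aeval (fun j : Fin k => ω ^ ((q ^ l * b j) % p)) s)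
      = ∑ μ ∈ s.support, ((s.coeff μ : ℤ) : K) * T (∑ j : Fin k, μ j * b j) := by
    have hterm : ∀ l : ℕ, MvPolynomial.aeval (fun j : Fin k => ω ^ ((q ^ l * b j) % p)) s
        = ∑ μ ∈ s.support, ((s.coeff μ : ℤ) : K) * ω ^ (q ^ l * (∑ j : Fin k, μ j * b j)) := by
      intro l
      rw [MvPolynomial.aeval_def, MvPolynomial.eval₂_eq']
      refine Finset.sum_congr rfl fun μ _ => ?_
      refine congrArg₂ (· * ·) (by simp [algebraMap_int_eq]) ?_
      simp only [← pow_mul]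
      rw [Finset.prod_pow_eq_pow_sum]
      apply hωcast
      push_cast [ZMod.natCast_mod]
      rw [Finset.mul_sum]
      exact Finset.sum_congr rfl fun j _ => by ring
    calc (∑ l ∈ Finset.range r,
          MvPolynomial.aeval (fun j : Fin k => ω ^ ((q ^ l * b j) % p)) s)
        = ∑ l ∈ Finset.range r, ∑ μ ∈ s.support,
            ((s.coeff μ : ℤ) : K) * ω ^ (q ^ l * (∑ j : Fin k, μ j * b j)) :=
          Finset.sum_congr rfl fun l _ => hterm l
      _ = ∑ μ ∈ s.support, ∑ l ∈ Finset.range r,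
            ((s.coeff μ : ℤ) : K) * ω ^ (q ^ l * (∑ j : Fin k, μ j * b j)) := Finset.sum_comm
      _ = ∑ μ ∈ s.support, ((s.coeff μ : ℤ) : K) * T (∑ j : Fin k, μ j * b j) := by
          refine Finset.sum_congr rfl fun μ _ => ?_
          simp only [hT]
          rw [Finset.mul_sum]
  -- rewrite `r * m0`
  have e0 : ((r * m0 : ℤ) : K) = ∑ μ ∈ s.support,
      ((s.coeff μ : ℤ) : K) * ((r : K) *
        (if (p : ℤ) ∣ (∑ j : Fin k, (μ j : ℤ) * (b j : ℤ)) then (1 : K) else 0)) := by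
    rw [hm0, Int.cast_mul, Int.cast_natCast]
    simp only [Int.cast_sum, Int.cast_mul, apply_ite (Int.cast : ℤ → K), Int.cast_one,
      Int.cast_zero]
    rw [Finset.mul_sum]
    exact Finset.sum_congr rfl fun μ _ => by ring
  -- rewrite each `m i * L i`
  have ei : ∀ i : Fin ((p - 1) / r), ((m i : ℤ) : K) * algebraMap (ZMod q) K (L i)
      = ∑ μ ∈ s.support, ((s.coeff μ : ℤ) : K) *
          ((if ∃ l : ℕ, ((∑ j : Fin k, (μ j : ℤ) * (b j : ℤ) : ℤ) : ZMod p)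
              = (n i : ZMod p) * (q : ZMod p) ^ l then (1 : K) else 0)
            * algebraMap (ZMod q) K (L i)) := by
    intro i
    rw [hm i]
    simp only [Int.cast_sum, Int.cast_mul, apply_ite (Int.cast : ℤ → K), Int.cast_one,
      Int.cast_zero]
    erw [Int.cast_sum]
    rw [Finset.sum_mul]
    exact Finset.sum_congr rfl fun μ _ => by
      rw [Int.cast_mul, apply_ite (Int.cast : ℤ → K), Int.cast_one, Int.cast_zero]; ring
  rw [hLHS]
  calc (∑ μ ∈ s.support, ((s.coeff μ : ℤ) : K) * T (∑ j : Fin k, μ j * b j))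
      = ∑ μ ∈ s.support,
          (((s.coeff μ : ℤ) : K) * ((r : K) *
              (if (p : ℤ) ∣ (∑ j : Fin k, (μ j : ℤ) * (b j : ℤ)) then (1 : K) else 0))
            - ∑ i : Fin ((p - 1) / r), ((s.coeff μ : ℤ) : K) *
                ((if ∃ l : ℕ, ((∑ j : Fin k, (μ j : ℤ) * (b j : ℤ) : ℤ) : ZMod p)
                    = (n i : ZMod p) * (q : ZMod p) ^ l then (1 : K) else 0)
                  * algebraMap (ZMod q) K (L i))) := by
        refine Finset.sum_congr rfl fun μ _ => ?_
        rw [← Finset.mul_sum, ← mul_sub]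
        congr 1
        have hci : ∀ i : Fin ((p - 1) / r),
            (∃ l : ℕ, ((∑ j : Fin k, (μ j : ℤ) * (b j : ℤ) : ℤ) : ZMod p)
                = (n i : ZMod p) * (q : ZMod p) ^ l)
              ↔ (∃ l : ℕ, ((∑ j : Fin k, μ j * b j : ℕ) : ZMod p)
                = (n i : ZMod p) * (q : ZMod p) ^ l) := by
          intro i; rw [hMcast μ]
        by_cases hdv : p ∣ (∑ j : Fin k, μ j * b j)
        · have hcond : ∀ i : Fin ((p - 1) / r),
              ¬ ∃ l : ℕ, ((∑ j : Fin k, μ j * b j : ℕ) : ZMod p)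
                  = (n i : ZMod p) * (q : ZMod p) ^ l := by
            rintro i ⟨l, hl⟩
            have h0 : ((∑ j : Fin k, μ j * b j : ℕ) : ZMod p) = 0 := by
              rw [ZMod.natCast_eq_zero_iff]; exact hdv
            rw [h0] at hl
            have hni : ((n i : ℕ) : ZMod p) ≠ 0 := by
              rw [Ne, ZMod.natCast_eq_zero_iff]
              exact fun hdd => hn0 i (Int.natCast_dvd_natCast.mpr hdd)
            exact (mul_ne_zero hni (pow_ne_zero l hqp0)) hl.symm
          have hTval : T (∑ j : Fin k, μ j * b j) = (r : K) := by
            simp only [hT]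
            have hone : ∀ l ∈ Finset.range r, ω ^ (q ^ l * (∑ j : Fin k, μ j * b j)) = 1 := by
              intro l _
              have hc := hωcast (q ^ l * (∑ j : Fin k, μ j * b j)) 0 (by
                have h0 : ((∑ j : Fin k, μ j * b j : ℕ) : ZMod p) = 0 := by
                  rw [ZMod.natCast_eq_zero_iff]; exact hdv
                push_cast [h0]; ring)
              rwa [pow_zero] at hc
            rw [Finset.sum_congr rfl hone, Finset.sum_const, Finset.card_range, nsmul_eq_mul,
              mul_one]
          rw [hTval, if_pos ((hMdvd μ).mpr hdv), mul_one,
            Finset.sum_eq_zero (fun i _ => by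
              rw [if_neg (fun hz => hcond i ((hci i).mp hz)), zero_mul]), sub_zero]
        · have hMz : ((∑ j : Fin k, μ j * b j : ℕ) : ZMod p) ≠ 0 := by
            rw [Ne, ZMod.natCast_eq_zero_iff]; exact hdv
          obtain ⟨i0, hi0, huniq⟩ := hn (Units.mk0 _ hMz)
          have hval : ((Units.mk0 _ hMz : (ZMod p)ˣ) : ZMod p)
              = ((∑ j : Fin k, μ j * b j : ℕ) : ZMod p) := rfl
          rw [hval] at hi0
          obtain ⟨l0, hl0⟩ := hi0
          have hcond : ∀ i : Fin ((p - 1) / r),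
              (∃ l : ℕ, ((∑ j : Fin k, μ j * b j : ℕ) : ZMod p)
                  = (n i : ZMod p) * (q : ZMod p) ^ l) ↔ i = i0 := by
            intro i
            constructor
            · intro hex; exact huniq i (by rw [hval]; exact hex)
            · rintro rfl; exact ⟨l0, hl0⟩
          have hknn : ¬ p ∣ n i0 := fun hdd => hn0 i0 (Int.natCast_dvd_natCast.mpr hdd)
          rw [if_neg (fun hz => hdv ((hMdvd μ).mp hz)), mul_zero, zero_sub,
            hTB l0 _ _ hl0, hkey (n i0) hknn, ← hL i0]
          congr 1
          rw [Finset.sum_congr rfl (fun i _ => by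
            rw [if_congr ((hci i).trans (hcond i)) rfl rfl, ite_mul, one_mul, zero_mul])]
          rw [Finset.sum_ite_eq' Finset.univ i0 (fun i => algebraMap (ZMod q) K (L i))]
          simp
    _ = ((r * m0 : ℤ) : K)
        - ∑ i : Fin ((p - 1) / r), ((m i : ℤ) : K) * algebraMap (ZMod q) K (L i) := by
        rw [Finset.sum_sub_distrib, e0, Finset.sum_comm]
        congr 1
        exact Finset.sum_congr rfl fun i _ => (ei i).symm
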